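/- Let X_1, …, X_n be independent random variables with X_i ~ Poisson(λ_i), where λ_1 ≥ λ_2 ≥ … ≥ λ_n > 0 and n ≥ 2. Then Pr(X_1 > X_2 > … > X_n) ≥ 1 − Σ_{i=1}^{n−1} exp(−(√λ_i − √λ_{i+1})²). -/

import Mathlib

open MeasureTheory ProbabilityTheory

lemma tsum_exp_aux (s : ℝ) : ∑' k : ℕ, (s ^ k / k.factorial : ℝ) = Real.exp s := by
  rw [Real.exp_eq_exp_ℝ, NormedSpace.exp_eq_tsum_div]

lemma tsum_ofReal_exp (s : ℝ) (hs : 0 ≤ s) :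
    ∑' k : ℕ, ENNReal.ofReal (s ^ k / k.factorial) = ENNReal.ofReal (Real.exp s) := by
  rw [← ENNReal.ofReal_tsum_of_nonneg (fun k => by positivity)
    (Real.summable_pow_div_factorial s), tsum_exp_aux]

lemma tsum_shift_le (s : ℝ) (hs : 0 ≤ s) (k : ℕ) :
    ∑' m : ℕ, ENNReal.ofReal (s ^ (k + m) / (k + m).factorial)
      ≤ ENNReal.ofReal (Real.exp s) := by
  rw [← tsum_ofReal_exp s hs]
  exact ENNReal.tsum_comp_le_tsum_of_injective (add_right_injective k)
    (fun j => ENNReal.ofReal (s ^ j / j.factorial))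

/-- Chernoff-type bound for the event `Y ≤ Z` with `Y ~ Poisson(a)`, `Z ~ Poisson(b)`,
`b ≤ a`. -/
lemma pair_bound {Ω : Type*} [MeasurableSpace Ω] (P : Measure Ω)
    (Y Z : Ω → ℕ) (a b : ℝ) (hb : 0 ≤ b) (hba : b ≤ a)
    (hY : ∀ k : ℕ, P {ω | Y ω = k}
      = ENNReal.ofReal (Real.exp (-a) * a ^ k / (Nat.factorial k)))
    (hZ : ∀ k : ℕ, P {ω | Z ω = k}
      = ENNReal.ofReal (Real.exp (-b) * b ^ k / (Nat.factorial k)))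
    (hind : IndepFun Y Z P) :
    P {ω | Y ω ≤ Z ω}
      ≤ ENNReal.ofReal (Real.exp (-(Real.sqrt a - Real.sqrt b) ^ 2)) := by
  have ha : 0 ≤ a := le_trans hb hba
  set s : ℝ := Real.sqrt (a * b) with hs
  have hs0 : 0 ≤ s := Real.sqrt_nonneg _
  have hssq : s ^ 2 = a * b := Real.sq_sqrt (mul_nonneg ha hb)
  have hbs : b ≤ s := by
    rw [hs]
    nth_rewrite 1 [← Real.sqrt_mul_self hb]
    exact Real.sqrt_le_sqrt (mul_le_mul_of_nonneg_right hba hb)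
  -- key exponent identity
  have hexp : Real.exp (-(Real.sqrt a - Real.sqrt b) ^ 2)
      = Real.exp (-a - b) * (Real.exp s * Real.exp s) := by
    rw [← Real.exp_add, ← Real.exp_add]
    congr 1
    have h1 : Real.sqrt a * Real.sqrt b = s := (Real.sqrt_mul ha b).symm
    have h2 : Real.sqrt a ^ 2 = a := Real.sq_sqrt ha
    have h3 : Real.sqrt b ^ 2 = b := Real.sq_sqrt hb
    nlinarith [h1, h2, h3]
  -- covering of the event
  have hsub : {ω | Y ω ≤ Z ω} ⊆ ⋃ k : ℕ, (Y ⁻¹' {k} ∩ Z ⁻¹' Set.Ici k) := by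
    intro ω hω
    exact Set.mem_iUnion.2 ⟨Y ω, rfl, hω⟩
  have hstep1 : P {ω | Y ω ≤ Z ω}
      ≤ ∑' k : ℕ, P (Y ⁻¹' {k} ∩ Z ⁻¹' Set.Ici k) :=
    le_trans (measure_mono hsub) (measure_iUnion_le _)
  have hprod : ∀ k : ℕ, P (Y ⁻¹' {k} ∩ Z ⁻¹' Set.Ici k)
      = P (Y ⁻¹' {k}) * P (Z ⁻¹' Set.Ici k) := fun k =>
    hind.measure_inter_preimage_eq_mul _ _ (measurableSet_singleton k) measurableSet_Ici
  have hIci : ∀ k : ℕ, P (Z ⁻¹' Set.Ici k)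
      ≤ ∑' m : ℕ, ENNReal.ofReal (Real.exp (-b) * b ^ (k + m) / (k + m).factorial) := by
    intro k
    have hcover : Z ⁻¹' Set.Ici k ⊆ ⋃ m : ℕ, {ω | Z ω = k + m} := by
      intro ω hω
      obtain ⟨m, hm⟩ := Nat.le.dest (hω : k ≤ Z ω)
      exact Set.mem_iUnion.2 ⟨m, hm.symm⟩
    calc P (Z ⁻¹' Set.Ici k) ≤ ∑' m : ℕ, P {ω | Z ω = k + m} :=
          le_trans (measure_mono hcover) (measure_iUnion_le _)
      _ = ∑' m : ℕ, ENNReal.ofReal (Real.exp (-b) * b ^ (k + m) / (k + m).factorial) :=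
          tsum_congr fun m => hZ (k + m)
  -- per-term bound
  have hterm : ∀ k m : ℕ,
      ENNReal.ofReal (Real.exp (-a) * a ^ k / k.factorial)
        * ENNReal.ofReal (Real.exp (-b) * b ^ (k + m) / (k + m).factorial)
      ≤ ENNReal.ofReal (Real.exp (-a - b)) * (ENNReal.ofReal (s ^ k / k.factorial)
          * ENNReal.ofReal (s ^ (k + m) / (k + m).factorial)) := by
    intro k m
    have e1 : (0:ℝ) ≤ Real.exp (-a) * a ^ k / k.factorial := by positivity
    have e2 : (0:ℝ) ≤ s ^ k / k.factorial := by positivity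
    have e3 : (0:ℝ) ≤ Real.exp (-a - b) := (Real.exp_pos _).le
    rw [← ENNReal.ofReal_mul e1, ← ENNReal.ofReal_mul e2, ← ENNReal.ofReal_mul e3]
    apply ENNReal.ofReal_le_ofReal
    have hkey : a ^ k * b ^ (k + m) ≤ s ^ k * s ^ (k + m) := by
      have h1 : a ^ k * b ^ (k + m) = (a * b) ^ k * b ^ m := by ring
      have h2 : s ^ k * s ^ (k + m) = (a * b) ^ k * s ^ m := by
        rw [← hssq]; ring
      rw [h1, h2]
      exact mul_le_mul_of_nonneg_left (pow_le_pow_left₀ hb hbs m)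
        (pow_nonneg (mul_nonneg ha hb) k)
    calc Real.exp (-a) * a ^ k / k.factorial
          * (Real.exp (-b) * b ^ (k + m) / (k + m).factorial)
        = Real.exp (-a) * Real.exp (-b)
            * (a ^ k * b ^ (k + m)) / ((k.factorial : ℝ) * (k + m).factorial) := by ring
      _ ≤ Real.exp (-a) * Real.exp (-b)
            * (s ^ k * s ^ (k + m)) / ((k.factorial : ℝ) * (k + m).factorial) := by
          gcongr
      _ = Real.exp (-a - b) * (s ^ k / k.factorial * (s ^ (k + m) / (k + m).factorial)) := by
          rw [← Real.exp_add]; ring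
  -- assemble
  calc P {ω | Y ω ≤ Z ω}
      ≤ ∑' k : ℕ, P (Y ⁻¹' {k}) * P (Z ⁻¹' Set.Ici k) := by
        rw [← tsum_congr hprod]; exact hstep1
    _ ≤ ∑' k : ℕ, ∑' m : ℕ,
          ENNReal.ofReal (Real.exp (-a) * a ^ k / k.factorial)
            * ENNReal.ofReal (Real.exp (-b) * b ^ (k + m) / (k + m).factorial) := by
        apply ENNReal.tsum_le_tsum
        intro k
        rw [show Y ⁻¹' ({k} : Set ℕ) = {ω | Y ω = k} from rfl, hY k, ENNReal.tsum_mul_left]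
        exact mul_le_mul_right (hIci k) _
    _ ≤ ∑' k : ℕ, ∑' m : ℕ,
          ENNReal.ofReal (Real.exp (-a - b)) * (ENNReal.ofReal (s ^ k / k.factorial)
            * ENNReal.ofReal (s ^ (k + m) / (k + m).factorial)) :=
        ENNReal.tsum_le_tsum fun k => ENNReal.tsum_le_tsum fun m => hterm k m
    _ = ∑' k : ℕ, ENNReal.ofReal (Real.exp (-a - b)) * ENNReal.ofReal (s ^ k / k.factorial)
            * ∑' m : ℕ, ENNReal.ofReal (s ^ (k + m) / (k + m).factorial) := by
        apply tsum_congr; intro k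
        rw [← ENNReal.tsum_mul_left]
        apply tsum_congr; intro m
        ring
    _ ≤ ∑' k : ℕ, ENNReal.ofReal (Real.exp (-a - b)) * ENNReal.ofReal (s ^ k / k.factorial)
            * ENNReal.ofReal (Real.exp s) :=
        ENNReal.tsum_le_tsum fun k => mul_le_mul_right (tsum_shift_le s hs0 k) _
    _ = ENNReal.ofReal (Real.exp (-a - b)) * ENNReal.ofReal (Real.exp s)
          * ∑' k : ℕ, ENNReal.ofReal (s ^ k / k.factorial) := by
        rw [← ENNReal.tsum_mul_left]
        apply tsum_congr; intro k
        ring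
    _ = ENNReal.ofReal (Real.exp (-(Real.sqrt a - Real.sqrt b) ^ 2)) := by
        rw [tsum_ofReal_exp s hs0, hexp, ENNReal.ofReal_mul (by positivity),
          ENNReal.ofReal_mul (by positivity)]
        ring

/-- If `X₁, …, Xₙ` are independent with `Xᵢ ~ Poisson(λᵢ)`, `λ₁ ≥ λ₂ ≥ … ≥ λₙ > 0`
and `n ≥ 2`, then
`Pr(X₁ > X₂ > … > Xₙ) ≥ 1 - ∑_{i=1}^{n-1} exp(-(√λᵢ - √λ_{i+1})²)`. -/
theorem prob_correct_order_ge
    {Ω : Type*} [MeasurableSpace Ω] (P : Measure Ω) [IsProbabilityMeasure P]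
    (n : ℕ) (hn : 2 ≤ n) (X : ℕ → Ω → ℕ) (lam : ℕ → ℝ)
    (hpos : 0 < lam n)
    (hmono : ∀ i : ℕ, 1 ≤ i → i < n → lam (i + 1) ≤ lam i)
    (hdist : ∀ i : ℕ, 1 ≤ i → i ≤ n → ∀ k : ℕ,
      P {ω | X i ω = k} =
        ENNReal.ofReal (Real.exp (-lam i) * lam i ^ k / (Nat.factorial k)))
    (hindep : iIndepFun
      (fun i : Finset.Icc 1 n => X i) P) :
    ENNReal.ofReal
        (1 - ∑ i ∈ Finset.Ico 1 n,
          Real.exp (-(Real.sqrt (lam i) - Real.sqrt (lam (i + 1))) ^ 2))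
      ≤ P {ω | ∀ i : ℕ, 1 ≤ i → i < n → X (i + 1) ω < X i ω} := by
  -- positivity of all the parameters
  have hge : ∀ d i : ℕ, 1 ≤ i → i + d = n → 0 < lam i := by
    intro d
    induction d with
    | zero =>
      intro i h1 h2
      have : i = n := by omega
      rwa [this]
    | succ d ih =>
      intro i h1 h2
      have hi : i < n := by omega
      exact lt_of_lt_of_le (ih (i + 1) (by omega) (by omega)) (hmono i h1 hi)
  have hpos' : ∀ i : ℕ, 1 ≤ i → i ≤ n → 0 < lam i := fun i h1 h2 =>
    hge (n - i) i h1 (by omega)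
  set good := {ω | ∀ i : ℕ, 1 ≤ i → i < n → X (i + 1) ω < X i ω} with hgood
  set bad : ℕ → Set Ω := fun i => {ω | X i ω ≤ X (i + 1) ω} with hbaddef
  -- pairwise bound
  have hbad : ∀ i ∈ Finset.Ico 1 n, P (bad i)
      ≤ ENNReal.ofReal (Real.exp (-(Real.sqrt (lam i) - Real.sqrt (lam (i + 1))) ^ 2)) := by
    intro i hi
    rw [Finset.mem_Ico] at hi
    obtain ⟨h1, h2⟩ := hi
    have hmem1 : i ∈ Finset.Icc 1 n := Finset.mem_Icc.mpr ⟨h1, le_of_lt h2⟩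
    have hmem2 : i + 1 ∈ Finset.Icc 1 n := Finset.mem_Icc.mpr ⟨by omega, by omega⟩
    have hne : (⟨i, hmem1⟩ : Finset.Icc 1 n) ≠ ⟨i + 1, hmem2⟩ := by
      intro h
      have := congrArg (fun x : Finset.Icc 1 n => (x : ℕ)) h
      simp at this
    have hIndep : IndepFun (X i) (X (i + 1)) P := hindep.indepFun hne
    exact pair_bound P (X i) (X (i + 1)) (lam i) (lam (i + 1))
      (hpos' (i + 1) (by omega) (by omega)).le (hmono i h1 h2)
      (hdist i h1 (le_of_lt h2)) (hdist (i + 1) (by omega) (by omega)) hIndep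
  -- union bound
  have hcover : (Set.univ : Set Ω) ⊆ good ∪ ⋃ i ∈ Finset.Ico 1 n, bad i := by
    intro ω _
    by_cases h : ∀ i : ℕ, 1 ≤ i → i < n → X (i + 1) ω < X i ω
    · exact Or.inl h
    · push_neg at h
      obtain ⟨i, h1, h2, h3⟩ := h
      exact Or.inr (Set.mem_biUnion (Finset.mem_Ico.mpr ⟨h1, h2⟩) h3)
  have h1le : (1 : ENNReal) ≤ P good + ∑ i ∈ Finset.Ico 1 n,
      ENNReal.ofReal (Real.exp (-(Real.sqrt (lam i) - Real.sqrt (lam (i + 1))) ^ 2)) := by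
    calc (1 : ENNReal) = P Set.univ := measure_univ.symm
      _ ≤ P (good ∪ ⋃ i ∈ Finset.Ico 1 n, bad i) := measure_mono hcover
      _ ≤ P good + P (⋃ i ∈ Finset.Ico 1 n, bad i) := measure_union_le _ _
      _ ≤ P good + ∑ i ∈ Finset.Ico 1 n, P (bad i) :=
          add_le_add_right (measure_biUnion_finset_le _ _) _
      _ ≤ P good + ∑ i ∈ Finset.Ico 1 n,
            ENNReal.ofReal (Real.exp (-(Real.sqrt (lam i) - Real.sqrt (lam (i + 1))) ^ 2)) :=
          add_le_add_right (Finset.sum_le_sum hbad) _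
  have hSnn : (0:ℝ) ≤ ∑ i ∈ Finset.Ico 1 n,
      Real.exp (-(Real.sqrt (lam i) - Real.sqrt (lam (i + 1))) ^ 2) :=
    Finset.sum_nonneg fun i _ => (Real.exp_pos _).le
  rw [ENNReal.ofReal_sub _ hSnn, ENNReal.ofReal_one,
    ENNReal.ofReal_sum_of_nonneg fun i _ => (Real.exp_pos _).le]
  exact tsub_le_iff_right.mpr h1le
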